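/- Define g(s) := ∫₀¹ f(x,s) dx. Then g(0) = 0, the map s ↦ g(s)/s is decreasing in s > 0, g(s) ≤ 0 for all s ≥ M, lim_{s→0⁺} g(s)/s = ∫₀¹ μ(x) dx > 0, and g admits a unique positive zero, denoted p₀. -/

import Mathlib

open MeasureTheory Filter Topology

/-- Define `g(s) := ∫₀¹ f(x,s) dx`. Then `g(0) = 0`, `s ↦ g(s)/s` is
decreasing in `s > 0`, `g(s) ≤ 0` for `s ≥ M`, `lim_{s→0⁺} g(s)/s = ∫₀¹ μ > 0`, and
`g` admits a unique positive zero `p₀`. -/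
theorem homogenized_nonlinearity_properties
    (f : ℝ → ℝ → ℝ) (μ : ℝ → ℝ) (M : ℝ)
    (hf_per : ∀ x s, f (x + 1) s = f x s)
    (hf_C1 : ContDiff ℝ 1 (fun q : ℝ × ℝ => f q.1 q.2))
    (hf_zero : ∀ x, f x 0 = 0)
    (hM : 0 ≤ M)
    (hf_M : ∀ x s, M ≤ s → f x s ≤ 0)
    (hf_dec : ∀ x, StrictAntiOn (fun s => f x s / s) (Set.Ioi 0))
    (hμ : ∀ x, Tendsto (fun s => f x s / s) (𝓝[>] (0:ℝ)) (𝓝 (μ x)))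
    (hμ_pos : 0 < ∫ x in (0:ℝ)..1, μ x) :
    (∫ x in (0:ℝ)..1, f x 0) = 0 ∧
    StrictAntiOn (fun s => (∫ x in (0:ℝ)..1, f x s) / s) (Set.Ioi 0) ∧
    (∀ s, M ≤ s → (∫ x in (0:ℝ)..1, f x s) ≤ 0) ∧
    Tendsto (fun s => (∫ x in (0:ℝ)..1, f x s) / s) (𝓝[>] (0:ℝ))
      (𝓝 (∫ x in (0:ℝ)..1, μ x)) ∧
    (0 < ∫ x in (0:ℝ)..1, μ x) ∧
    (∃! p₀ : ℝ, 0 < p₀ ∧ (∫ x in (0:ℝ)..1, f x p₀) = 0) := by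
  have hcont : Continuous (fun q : ℝ × ℝ => f q.1 q.2) := hf_C1.continuous
  have hcx : ∀ s, Continuous (fun x => f x s) := fun s =>
    hcont.comp (continuous_id.prodMk continuous_const)
  have hint : ∀ s, IntervalIntegrable (fun x => f x s) volume 0 1 := fun s =>
    (hcx s).intervalIntegrable 0 1
  -- μ is the partial derivative of f in s at s = 0, hence continuous
  have hdiff : Differentiable ℝ (fun q : ℝ × ℝ => f q.1 q.2) := hf_C1.differentiable one_ne_zero
  have hder : ∀ x : ℝ, HasDerivAt (fun s => f x s)
      (fderiv ℝ (fun q : ℝ × ℝ => f q.1 q.2) (x, 0) (0, 1)) 0 := by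
    intro x
    have h1 : HasDerivAt (fun s : ℝ => ((x : ℝ), s)) ((0 : ℝ), (1 : ℝ)) 0 :=
      (hasDerivAt_const (0:ℝ) x).prodMk (hasDerivAt_id (0:ℝ))
    exact (hdiff (x, 0)).hasFDerivAt.comp_hasDerivAt 0 h1
  have hμ_eq : ∀ x, μ x = fderiv ℝ (fun q : ℝ × ℝ => f q.1 q.2) (x, 0) (0, 1) := by
    intro x
    have h1 := hasDerivAt_iff_tendsto_slope.mp (hder x)
    have h3 : Tendsto (slope (fun s => f x s) 0) (𝓝[>] (0:ℝ))
        (𝓝 (fderiv ℝ (fun q : ℝ × ℝ => f q.1 q.2) (x, 0) (0, 1))) :=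
      h1.mono_left (nhdsWithin_mono 0 (fun y hy => ne_of_gt hy))
    have h2 : Tendsto (fun s => f x s / s) (𝓝[>] (0:ℝ))
        (𝓝 (fderiv ℝ (fun q : ℝ × ℝ => f q.1 q.2) (x, 0) (0, 1))) := by
      refine h3.congr' ?_
      filter_upwards [self_mem_nhdsWithin] with s hs
      simp [slope_def_field, hf_zero x]
    exact tendsto_nhds_unique (hμ x) h2
  have hμ_cont : Continuous μ := by
    have h1 : Continuous (fderiv ℝ (fun q : ℝ × ℝ => f q.1 q.2)) :=
      hf_C1.continuous_fderiv one_ne_zero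
    have h2 : Continuous fun x : ℝ =>
        fderiv ℝ (fun q : ℝ × ℝ => f q.1 q.2) (x, 0) (0, 1) :=
      (h1.comp (continuous_id.prodMk continuous_const)).clm_apply continuous_const
    exact h2.congr fun x => (hμ_eq x).symm
  -- Part 1
  have part1 : (∫ x in (0:ℝ)..1, f x 0) = 0 := by simp [hf_zero]
  -- Part 2
  have part2 : StrictAntiOn (fun s => (∫ x in (0:ℝ)..1, f x s) / s) (Set.Ioi 0) := by
    intro a ha b hb hab
    have hsub : 0 < ∫ x in (0:ℝ)..1, (f x a / a - f x b / b) := by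
      apply intervalIntegral.intervalIntegral_pos_of_pos_on
      · exact (((hcx a).div_const a).sub ((hcx b).div_const b)).intervalIntegrable 0 1
      · intro x _
        exact sub_pos.mpr (hf_dec x ha hb hab)
      · norm_num
    rw [intervalIntegral.integral_sub (((hcx a).div_const a).intervalIntegrable 0 1)
      (((hcx b).div_const b).intervalIntegrable 0 1), sub_pos] at hsub
    simpa [intervalIntegral.integral_div] using hsub
  -- Part 3
  have part3 : ∀ s, M ≤ s → (∫ x in (0:ℝ)..1, f x s) ≤ 0 := by
    intro s hs
    have h0 : (∫ x in (0:ℝ)..1, f x s) ≤ ∫ _x in (0:ℝ)..1, (0:ℝ) :=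
      intervalIntegral.integral_mono_on (by norm_num) (hint s)
        intervalIntegrable_const (fun x _ => hf_M x s hs)
    simpa using h0
  -- Part 4
  have part4 : Tendsto (fun s => (∫ x in (0:ℝ)..1, f x s) / s) (𝓝[>] (0:ℝ))
      (𝓝 (∫ x in (0:ℝ)..1, μ x)) := by
    have heq : (fun s => (∫ x in (0:ℝ)..1, f x s) / s)
        = fun s => ∫ x in (0:ℝ)..1, f x s / s := by
      funext s; rw [intervalIntegral.integral_div]
    rw [heq]
    apply intervalIntegral.tendsto_integral_filter_of_dominated_convergence
      (bound := fun x => |f x 1| + |μ x|)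
    · exact Filter.Eventually.of_forall fun s => ((hcx s).div_const s).aestronglyMeasurable
    · filter_upwards [Ioc_mem_nhdsGT (by norm_num : (0:ℝ) < 1)] with s hs
      refine Filter.Eventually.of_forall fun x _ => ?_
      have hs0 : (0:ℝ) < s := hs.1
      have hub : f x s / s ≤ μ x := by
        refine ge_of_tendsto (hμ x) ?_
        filter_upwards [Ioo_mem_nhdsGT_of_mem ⟨le_refl (0:ℝ), hs0⟩] with t ht
        exact le_of_lt (hf_dec x ht.1 hs0 ht.2)
      have hlb : f x 1 ≤ f x s / s := by
        have h := (hf_dec x).antitoneOn hs0 (Set.mem_Ioi.mpr one_pos) hs.2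
        simpa using h
      rw [Real.norm_eq_abs, abs_le]
      constructor
      · have := neg_abs_le (f x 1)
        have := abs_nonneg (μ x)
        linarith
      · have := le_abs_self (μ x)
        have := abs_nonneg (f x 1)
        linarith
    · exact ((hcx 1).abs.add hμ_cont.abs).intervalIntegrable 0 1
    · exact Filter.Eventually.of_forall fun x _ => hμ x
  -- Part 6: unique positive zero
  have hg_cont : Continuous (fun s => ∫ x in (0:ℝ)..1, f x s) := by
    apply intervalIntegral.continuous_parametric_intervalIntegral_of_continuous'
      (f := fun s x => f x s)
    exact hcont.comp continuous_swap
  have part6 : ∃! p₀ : ℝ, 0 < p₀ ∧ (∫ x in (0:ℝ)..1, f x p₀) = 0 := by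
    -- find ε with 0 < ε < M + 1 and g ε > 0
    have hev : ∀ᶠ s in 𝓝[>] (0:ℝ),
        0 < (∫ x in (0:ℝ)..1, f x s) / s := part4.eventually (eventually_gt_nhds hμ_pos)
    have hev2 : ∀ᶠ s in 𝓝[>] (0:ℝ), s ∈ Set.Ioo (0:ℝ) (M + 1) :=
      Ioo_mem_nhdsGT_of_mem ⟨le_refl 0, by linarith⟩
    obtain ⟨ε, hε1, hε2⟩ := (hev.and hev2).exists
    have hε0 : (0:ℝ) < ε := hε2.1
    have hgε : 0 < ∫ x in (0:ℝ)..1, f x ε := by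
      have h := mul_pos hε1 hε0
      rwa [div_mul_cancel₀ _ (ne_of_gt hε0)] at h
    have hgM : (∫ x in (0:ℝ)..1, f x (M + 1)) ≤ 0 := part3 (M + 1) (by linarith)
    -- IVT
    have hivt := intermediate_value_Icc' (le_of_lt hε2.2)
      (hg_cont.continuousOn :
        ContinuousOn (fun s => ∫ x in (0:ℝ)..1, f x s) (Set.Icc ε (M + 1)))
    have h0mem : (0:ℝ) ∈ Set.Icc (∫ x in (0:ℝ)..1, f x (M + 1)) (∫ x in (0:ℝ)..1, f x ε) :=
      ⟨hgM, le_of_lt hgε⟩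
    obtain ⟨p, hp_mem, hp0⟩ := hivt h0mem
    have hp_pos : 0 < p := lt_of_lt_of_le hε0 hp_mem.1
    refine ⟨p, ⟨hp_pos, hp0⟩, ?_⟩
    rintro q ⟨hq_pos, hq0⟩
    apply part2.injOn (Set.mem_Ioi.mpr hq_pos) (Set.mem_Ioi.mpr hp_pos)
    simp only [hq0, hp0, zero_div]
  exact ⟨part1, part2, part3, part4, hμ_pos, part6⟩
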